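/- Let λ, β ∈ ℝ with λ ≠ 0 and λβ < 0. Then every differentiable function u : ℝ → ℝ satisfying u'(x) = λ(βx·u(x) − 1) for all x ∈ ℝ tends to 0 as x → +∞ and also as x → −∞; in particular no solution grows exponentially in either direction. -/

import Mathlib

open Real Filter intervalIntegral

lemma decay_aux (a c : ℝ) (ha : a < 0) (v : ℝ → ℝ)
    (hv : ∀ x : ℝ, HasDerivAt v (a * x * v x + c) x) :
    Filter.Tendsto v Filter.atTop (nhds 0) := by
  set b : ℝ := -a with hbdef
  have hb0 : 0 < b := by simp [hbdef]; linarith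
  set w : ℝ → ℝ := fun x => Real.exp (b * x ^ 2 / 2) * v x with hwdef
  have hE : ∀ x : ℝ, HasDerivAt (fun x => Real.exp (b * x ^ 2 / 2))
      (b * x * Real.exp (b * x ^ 2 / 2)) x := by
    intro x
    have h1 : HasDerivAt (fun x : ℝ => b * x ^ 2 / 2) (b * x) x := by
      have := ((hasDerivAt_pow 2 x).const_mul b).div_const 2
      simpa using this.congr_deriv (by ring)
    simpa [mul_comm] using h1.exp
  have hw' : ∀ x : ℝ, HasDerivAt w (c * Real.exp (b * x ^ 2 / 2)) x := by
    intro x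
    have := (hE x).mul (hv x)
    convert this using 1
    · rfl
    · rfl
    · rfl
    have : a = -b := by simp [hbdef]
    rw [this]; ring
  have hcont : Continuous fun t : ℝ => c * Real.exp (b * t ^ 2 / 2) := by
    continuity
  have hFTC : ∀ x : ℝ, w x = w 0 + c * ∫ t in (0:ℝ)..x, Real.exp (b * t ^ 2 / 2) := by
    intro x
    have := intervalIntegral.integral_eq_sub_of_hasDerivAt
      (fun t _ => hw' t) (hcont.intervalIntegrable 0 x)
    rw [intervalIntegral.integral_const_mul] at this
    linarith [this]
  -- the bound
  have hbound : ∀ x : ℝ, 1 ≤ x → |v x| ≤ |w 0| * Real.exp (-(b * x ^ 2 / 2)) + 2 * |c| / (b * x) := by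
    intro x hx
    have hx0 : 0 < x := by linarith
    have hbx : 0 < b * x := mul_pos hb0 hx0
    -- integral bound
    have hI : (∫ t in (0:ℝ)..x, Real.exp (b * t ^ 2 / 2)) ≤ (2 / (b * x)) * Real.exp (b * x ^ 2 / 2) := by
      have hmono : (∫ t in (0:ℝ)..x, Real.exp (b * t ^ 2 / 2)) ≤ ∫ t in (0:ℝ)..x, Real.exp (b * x * t / 2) := by
        apply intervalIntegral.integral_mono_on hx0.le
        · exact (by continuity : Continuous fun t : ℝ => Real.exp (b * t ^ 2 / 2)).intervalIntegrable 0 x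
        · exact (by continuity : Continuous fun t : ℝ => Real.exp (b * x * t / 2)).intervalIntegrable 0 x
        · intro t ht
          apply Real.exp_le_exp.2
          have ht0 : 0 ≤ t := ht.1
          have htx : t ≤ x := ht.2
          have : t ^ 2 ≤ x * t := by nlinarith
          nlinarith
      have hcomp : (∫ t in (0:ℝ)..x, Real.exp (b * x * t / 2))
          = (2 / (b * x)) * Real.exp (b * x * x / 2) - (2 / (b * x)) * Real.exp (b * x * 0 / 2) := by
        have hg : ∀ t ∈ Set.uIcc (0:ℝ) x, HasDerivAt (fun t => (2 / (b * x)) * Real.exp (b * x * t / 2))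
            (Real.exp (b * x * t / 2)) t := by
          intro t _
          have h1 : HasDerivAt (fun t : ℝ => b * x * t / 2) (b * x / 2) t := by
            simpa using ((hasDerivAt_id t).const_mul (b * x)).div_const 2
          have := (h1.exp).const_mul (2 / (b * x))
          convert this using 1
          · rfl
          · rfl
          field_simp
        have := intervalIntegral.integral_eq_sub_of_hasDerivAt hg
          ((by continuity : Continuous fun t : ℝ => Real.exp (b * x * t / 2)).intervalIntegrable 0 x)
        linarith [this]
      calc (∫ t in (0:ℝ)..x, Real.exp (b * t ^ 2 / 2)) ≤ _ := hmono
        _ = _ := hcomp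
        _ ≤ (2 / (b * x)) * Real.exp (b * x ^ 2 / 2) := by
            have : (0:ℝ) ≤ (2 / (b * x)) * Real.exp (b * x * 0 / 2) := by positivity
            have hxx : b * x * x / 2 = b * x ^ 2 / 2 := by ring
            rw [hxx]; linarith
    have hI0 : 0 ≤ ∫ t in (0:ℝ)..x, Real.exp (b * t ^ 2 / 2) :=
      intervalIntegral.integral_nonneg hx0.le (fun t _ => (Real.exp_pos _).le)
    -- v x = w x * exp(-(b x^2/2))
    have hvx : v x = w x * Real.exp (-(b * x ^ 2 / 2)) := by
      rw [hwdef]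
      simp only []
      rw [mul_comm (Real.exp (b * x ^ 2 / 2)) (v x), mul_assoc, ← Real.exp_add]
      simp
    rw [hvx, abs_mul, abs_of_pos (Real.exp_pos _)]
    have hwx : |w x| ≤ |w 0| + |c| * ((2 / (b * x)) * Real.exp (b * x ^ 2 / 2)) := by
      have hcI : |c * ∫ t in (0:ℝ)..x, Real.exp (b * t ^ 2 / 2)|
          ≤ |c| * ((2 / (b * x)) * Real.exp (b * x ^ 2 / 2)) := by
        rw [abs_mul, abs_of_nonneg hI0]
        exact mul_le_mul_of_nonneg_left hI (abs_nonneg c)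
      rw [hFTC x]
      have := abs_add_le (w 0) (c * ∫ t in (0:ℝ)..x, Real.exp (b * t ^ 2 / 2))
      linarith
    have hEpos := Real.exp_pos (-(b * x ^ 2 / 2))
    calc |w x| * Real.exp (-(b * x ^ 2 / 2))
        ≤ (|w 0| + |c| * ((2 / (b * x)) * Real.exp (b * x ^ 2 / 2))) * Real.exp (-(b * x ^ 2 / 2)) :=
          mul_le_mul_of_nonneg_right hwx hEpos.le
      _ = |w 0| * Real.exp (-(b * x ^ 2 / 2)) + 2 * |c| / (b * x) := by
          have hexp : Real.exp (b * x ^ 2 / 2) * Real.exp (-(b * x ^ 2 / 2)) = 1 := by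
            rw [← Real.exp_add]; simp
          rw [add_mul]
          congr 1
          rw [mul_assoc, mul_assoc, hexp, mul_one]
          field_simp
  -- squeeze
  have hlim : Filter.Tendsto (fun x => |w 0| * Real.exp (-(b * x ^ 2 / 2)) + 2 * |c| / (b * x))
      Filter.atTop (nhds 0) := by
    have h1 : Filter.Tendsto (fun x : ℝ => |w 0| * Real.exp (-(b * x ^ 2 / 2))) Filter.atTop (nhds 0) := by
      have : Filter.Tendsto (fun x : ℝ => -(b * x ^ 2 / 2)) Filter.atTop Filter.atBot := by
        apply Filter.tendsto_neg_atBot_iff.2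
        apply Filter.Tendsto.atTop_div_const (by norm_num)
        exact (tendsto_pow_atTop (by norm_num)).const_mul_atTop hb0
      simpa using (Real.tendsto_exp_atBot.comp this).const_mul (|w 0|)
    have h2 : Filter.Tendsto (fun x : ℝ => 2 * |c| / (b * x)) Filter.atTop (nhds 0) := by
      apply Filter.Tendsto.div_atTop tendsto_const_nhds
      exact (tendsto_id.const_mul_atTop hb0)
    simpa using h1.add h2
  apply squeeze_zero_norm' _ hlim
  filter_upwards [Filter.eventually_ge_atTop (1:ℝ)] with x hx
  exact hbound x hx

/-- The Ω < 0 (faux canard) case of Lemma 6.2: if `λ ≠ 0` and `λβ < 0`, every solution of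
the variational equation `u' = λ(βxu − 1)` tends to 0 as `x → ±∞`; in particular no
solution grows exponentially in either direction. -/
theorem variational_solutions_decay
    (l β : ℝ) (hl : l ≠ 0) (hlβ : l * β < 0)
    (u : ℝ → ℝ) (hu : ∀ x : ℝ, HasDerivAt u (l * (β * x * u x - 1)) x) :
    Filter.Tendsto u Filter.atTop (nhds 0) ∧
    Filter.Tendsto u Filter.atBot (nhds 0) := by
  constructor
  · apply decay_aux (l * β) (-l) hlβ u
    intro x
    convert hu x using 1
    ring
  · have hv : ∀ x : ℝ, HasDerivAt (fun x => u (-x)) ((l * β) * x * u (-x) + l) x := by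
      intro x
      have := (hu (-x)).comp x (hasDerivAt_neg x)
      convert this using 1
      · rfl
      · rfl
      · rfl
      ring
    have h := decay_aux (l * β) l hlβ _ hv
    have h2 := h.comp tendsto_neg_atBot_atTop
    have heq : ((fun x => u (-x)) ∘ Neg.neg) = u := by funext x; simp
    rwa [heq] at h2
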